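/- Let X₊ and X₋ be finite disjoint subsets of ℝⁿ. If the convex hull of X₊ is disjoint from X₋, then there exist m, weights w_i ∈ ℝⁿ, biases b_i ∈ ℝ, coefficients a_i ≤ 0, and c ≥ 0 such that f(x) = ∑ a_i·max(0, ⟨w_i, x⟩ + b_i) + c satisfies f(x) > 0 for all x ∈ X₊ and f(x) < 0 for all x ∈ X₋. -/

import Mathlib

/-- If the convex hull of the finite set `Xp` is disjoint from the finite set `Xm` (and the
two sets are disjoint), then there is a sign-constrained single-hidden-layer rectifier
network separating `Xp` (positive) from `Xm` (negative). -/
theorem convexly_separable_implies_scrn_separator (n : ℕ) (Xp Xm : Set (Fin n → ℝ))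
    (hfp : Xp.Finite) (hfm : Xm.Finite) (hdisj : Disjoint Xp Xm)
    (hsep : Disjoint (convexHull ℝ Xp) Xm) :
    ∃ (m : ℕ) (w : Fin m → Fin n → ℝ) (b a : Fin m → ℝ) (c : ℝ),
      (∀ i, a i ≤ 0) ∧ 0 ≤ c ∧
      (∀ x ∈ Xp, 0 < (∑ i, a i * max 0 (∑ j, w i j * x j + b i)) + c) ∧
      (∀ x ∈ Xm, (∑ i, a i * max 0 (∑ j, w i j * x j + b i)) + c < 0) := by
  classical
  have hclosed : IsClosed (convexHull ℝ Xp) := (hfp.isCompact_convexHull (𝕜 := ℝ)).isClosed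
  have hconv : Convex ℝ (convexHull ℝ Xp) := convex_convexHull ℝ Xp
  have hsep' : ∀ y : hfm.toFinset, ∃ (f : (Fin n → ℝ) →L[ℝ] ℝ) (u : ℝ),
      (∀ x ∈ convexHull ℝ Xp, f x < u) ∧ u < f y.1 := by
    intro y
    have hy : (y : Fin n → ℝ) ∈ Xm := (hfm.mem_toFinset).1 y.2
    have : (y : Fin n → ℝ) ∉ convexHull ℝ Xp := fun h =>
      (Set.disjoint_left.1 hsep h) hy
    exact geometric_hahn_banach_closed_point hconv hclosed this
  choose F U hFU hU using hsep'
  have e : Fin hfm.toFinset.card ≃ hfm.toFinset := hfm.toFinset.equivFin.symm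
  have hph : ∀ i, 0 < F (e i) (e i).1 - U (e i) := fun i => by
    have := hU (e i); linarith
  refine ⟨hfm.toFinset.card, fun i j => F (e i) (fun k => if j = k then 1 else 0),
    fun i => -(U (e i)),
    fun i => -2 / (F (e i) (e i).1 - U (e i)), 1, ?_, ?_, ?_, ?_⟩
  · intro i
    exact div_nonpos_of_nonpos_of_nonneg (by norm_num) (le_of_lt (hph i))
  · norm_num
  all_goals {
    have hrep : ∀ (i) (x : Fin n → ℝ),
        (F (e i)) x = ∑ j, F (e i) (fun k => if j = k then 1 else 0) * x j := by
      intro i x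
      have := LinearMap.pi_apply_eq_sum_univ ((F (e i)) : (Fin n → ℝ) →ₗ[ℝ] ℝ) x
      simpa [smul_eq_mul, mul_comm] using this
    first
    | · intro x hx
        have hz : ∀ i ∈ Finset.univ,
            (-2 / (F (e i) (e i).1 - U (e i))) *
              max 0 (∑ j, F (e i) (fun k => if j = k then 1 else 0) * x j + -(U (e i))) = 0 := by
          intro i _
          have hlt : (F (e i)) x < U (e i) := hFU (e i) x (subset_convexHull ℝ Xp hx)
          rw [← hrep i x] at *
          rw [max_eq_left (by linarith), mul_zero]
        rw [Finset.sum_congr rfl hz, Finset.sum_const_zero]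
        norm_num
    | · intro y hy
        set i₀ := e.symm ⟨y, hfm.mem_toFinset.2 hy⟩ with hi₀
        have hey : ((e i₀ : hfm.toFinset) : Fin n → ℝ) = y := by
          rw [hi₀, Equiv.apply_symm_apply]
        have hterm : ∀ i,
            (-2 / (F (e i) (e i).1 - U (e i))) *
              max 0 (∑ j, F (e i) (fun k => if j = k then 1 else 0) * y j + -(U (e i))) ≤ 0 :=
          fun i => mul_nonpos_of_nonpos_of_nonneg
            (div_nonpos_of_nonpos_of_nonneg (by norm_num) (le_of_lt (hph i)))
            (le_max_left _ _)
        have hkey : (-2 / (F (e i₀) (e i₀).1 - U (e i₀))) *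
              max 0 (∑ j, F (e i₀) (fun k => if j = k then 1 else 0) * y j + -(U (e i₀))) = -2 := by
          rw [← hrep i₀ y]
          have h1 : F (e i₀) y - U (e i₀) = F (e i₀) (e i₀).1 - U (e i₀) := by rw [hey]
          have h2 : max 0 (F (e i₀) y + -(U (e i₀))) = F (e i₀) (e i₀).1 - U (e i₀) := by
            rw [max_eq_right (by have := hph i₀; linarith [h1])]
            linarith [h1]
          rw [h2, div_mul_cancel₀]
          exact ne_of_gt (hph i₀)
        have hsum : (∑ i, (-2 / (F (e i) (e i).1 - U (e i))) *
              max 0 (∑ j, F (e i) (fun k => if j = k then 1 else 0) * y j + -(U (e i)))) ≤ -2 := by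
          have herase : (∑ i ∈ Finset.univ.erase i₀, (-2 / (F (e i) (e i).1 - U (e i))) *
              max 0 (∑ j, F (e i) (fun k => if j = k then 1 else 0) * y j + -(U (e i)))) ≤ 0 :=
            Finset.sum_nonpos (fun i _ => hterm i)
          rw [← Finset.add_sum_erase _ _ (Finset.mem_univ i₀), hkey]
          linarith
        linarith }
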